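/- For all x in (-1,1), the sum over k ≥ 1 of binomial(2k, k) * x^{2k} / (2^{2k} * 2k) equals log 2 - log(1 + sqrt(1 - x^2)). -/

import Mathlib

open Real Set

noncomputable def cb (k : ℕ) : ℝ := ((2 * k).choose k : ℝ) / 4 ^ k

lemma cb_nonneg (k : ℕ) : 0 ≤ cb k := by unfold cb; positivity

lemma cb_le_one (k : ℕ) : cb k ≤ 1 := by
  rw [cb, div_le_one (by positivity)]
  have h : (2 * k).choose k ≤ 2 ^ (2 * k) :=
    calc (2*k).choose k ≤ ∑ m ∈ Finset.range (2*k+1), (2*k).choose m :=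
          Finset.single_le_sum (fun i _ => Nat.zero_le _) (Finset.mem_range.2 (by omega))
      _ = 2 ^ (2*k) := Nat.sum_range_choose (2*k)
  calc ((2*k).choose k : ℝ) ≤ (2:ℝ) ^ (2*k) := by exact_mod_cast h
    _ = 4 ^ k := by rw [pow_mul]; norm_num

lemma cb_abs_le_one (k : ℕ) : |cb k| ≤ 1 := by
  rw [abs_of_nonneg (cb_nonneg k)]; exact cb_le_one k

lemma cb_zero : cb 0 = 1 := by simp [cb]

lemma cb_rec (k : ℕ) : 2 * ((k:ℝ)+1) * cb (k+1) = (2*(k:ℝ)+1) * cb k := by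
  have h := Nat.succ_mul_centralBinom_succ k
  have h' : ((k:ℝ)+1) * ((2*(k+1)).choose (k+1) : ℝ) = 2*(2*(k:ℝ)+1) * ((2*k).choose k) := by
    have := congrArg (Nat.cast (R := ℝ)) h
    push_cast [Nat.centralBinom] at this
    push_cast
    linarith [this]
  rw [cb, cb]
  linear_combination (2/(4:ℝ)^(k+1)) * h'

lemma summable_cb_mul_pow {t : ℝ} (ht : |t| < 1) : Summable (fun k => cb k * t ^ k) := by
  apply Summable.of_norm_bounded (summable_geometric_of_lt_one (abs_nonneg t) ht)
  intro k
  rw [norm_mul, norm_pow]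
  calc ‖cb k‖ * |t| ^ k ≤ 1 * |t| ^ k := by
        gcongr; exact cb_abs_le_one k
    _ = |t| ^ k := one_mul _

lemma summable_cb_deriv {r : ℝ} (hr0 : 0 < r) (hr1 : r < 1) {y : ℝ} (hy : |y| ≤ r) :
    Summable (fun k : ℕ => cb k * (k * y ^ (k-1))) := by
  have hu : Summable (fun k : ℕ => (k:ℝ) * r ^ (k-1)) := by
    have h1 : Summable (fun k : ℕ => (k:ℝ) * r ^ k) := by
      simpa using summable_pow_mul_geometric_of_norm_lt_one 1
        (r := r) (by rwa [Real.norm_eq_abs, abs_of_pos hr0])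
    have := h1.mul_left (1/r)
    apply this.congr
    intro k
    cases k with
    | zero => simp
    | succ n =>
      simp only [Nat.add_sub_cancel]
      field_simp
      ring
  apply Summable.of_norm_bounded hu
  intro k
  rw [norm_mul, norm_mul, norm_pow, Real.norm_natCast, Real.norm_eq_abs]
  calc |cb k| * ((k:ℝ) * |y| ^ (k-1)) ≤ 1 * ((k:ℝ) * r ^ (k-1)) := by
        have hyk : |y| ^ (k-1) ≤ r ^ (k-1) := pow_le_pow_left₀ (abs_nonneg y) hy _
        have := cb_abs_le_one k
        have h2 : (0:ℝ) ≤ (k:ℝ) := Nat.cast_nonneg k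
        nlinarith [abs_nonneg (cb k), pow_nonneg (abs_nonneg y) (k-1), mul_nonneg h2 (pow_nonneg (abs_nonneg y) (k-1))]
    _ = (k:ℝ) * r ^ (k-1) := one_mul _

lemma cb_deriv_norm_le {r y : ℝ} (hy : |y| ≤ r) (k : ℕ) :
    ‖cb k * ((k:ℝ) * y^(k-1))‖ ≤ (k:ℝ) * r^(k-1) := by
  rw [norm_mul, norm_mul, norm_pow, Real.norm_natCast]
  simp only [Real.norm_eq_abs]
  have hyk : |y| ^ (k-1) ≤ r ^ (k-1) := pow_le_pow_left₀ (abs_nonneg y) hy _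
  have h1 := cb_abs_le_one k
  have h2 : (0:ℝ) ≤ (k:ℝ) := Nat.cast_nonneg k
  nlinarith [abs_nonneg (cb k), pow_nonneg (abs_nonneg y) (k-1),
    mul_nonneg h2 (pow_nonneg (abs_nonneg y) (k-1))]

lemma cb_ode {y D : ℝ} (hD : HasSum (fun k : ℕ => cb k * ((k:ℝ) * y^(k-1))) D) :
    HasSum (fun k : ℕ => cb k * y ^ k) (2*(1-y)*D) := by
  have h1 : HasSum (fun k : ℕ => cb (k+1) * (((k:ℝ)+1) * y^k)) D := by
    have h := (hasSum_nat_add_iff' (f := fun k : ℕ => cb k * ((k:ℝ) * y^(k-1))) 1).mpr hD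
    simp only [Finset.range_one, Finset.sum_singleton, Nat.cast_zero, zero_mul, mul_zero,
      sub_zero] at h
    exact HasSum.congr_fun h (fun k => by push_cast [Nat.add_sub_cancel]; ring)
  have h2 : HasSum (fun k : ℕ => 2*((k:ℝ)+1) * cb (k+1) * y^k) (2*D) :=
    HasSum.congr_fun (h1.mul_left 2) (fun k => by ring)
  have h3 : HasSum (fun k : ℕ => 2*((k:ℝ)+1) * cb (k+1) * y^(k+1)) (2*y*D) :=
    HasSum.congr_fun (h1.mul_left (2*y)) (fun k => by ring)
  set w : ℕ → ℝ := fun k => 2*(k:ℝ) * cb k * y^k with hw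
  have h3' : HasSum (fun k : ℕ => w (k+1)) (2*y*D) :=
    HasSum.congr_fun h3 (fun k => by simp only [hw]; push_cast; ring)
  have h4 : HasSum w (2*y*D) := by
    have h := (hasSum_nat_add_iff (f := w) 1).mp h3'
    simpa [hw] using h
  have h6 : HasSum (fun k : ℕ => cb k * y ^ k) (2*D - 2*y*D) := by
    refine HasSum.congr_fun (h2.sub h4) fun k => ?_
    show cb k * y^k = 2*((k:ℝ)+1) * cb (k+1) * y^k - w k
    simp only [hw]
    linear_combination (-(y^k)) * cb_rec k
  convert h6 using 1
  ring

lemma hasSum_cb {t : ℝ} (ht0 : 0 ≤ t) (ht1 : t < 1) :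
    HasSum (fun k : ℕ => cb k * t ^ k) (1 / Real.sqrt (1 - t)) := by
  set r : ℝ := (t+1)/2 with hrdef
  have hr0 : 0 < r := by rw [hrdef]; linarith
  have hr1 : r < 1 := by rw [hrdef]; linarith
  have htr : t < r := by rw [hrdef]; linarith
  have hu : Summable (fun k : ℕ => (k:ℝ) * r ^ (k-1)) := by
    have h1 : Summable (fun k : ℕ => (k:ℝ) * r ^ k) := by
      simpa using summable_pow_mul_geometric_of_norm_lt_one 1
        (r := r) (by rwa [Real.norm_eq_abs, abs_of_pos hr0])
    apply (h1.mul_left (1/r)).congr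
    intro k
    cases k with
    | zero => simp
    | succ n => simp only [Nat.add_sub_cancel]; field_simp; ring
  -- derivative of the sum
  have key : ∀ y ∈ Ioo (-r) r,
      HasDerivAt (fun z => ∑' k : ℕ, cb k * z ^ k)
        (∑' k : ℕ, cb k * ((k:ℝ) * y ^ (k-1))) y := by
    intro y hy
    refine hasDerivAt_tsum_of_isPreconnected hu isOpen_Ioo (convex_Ioo _ _).isPreconnected
      (fun n z _ => (hasDerivAt_pow n z).const_mul (cb n))
      (fun n z hz => cb_deriv_norm_le (le_of_lt ?_) n)
      (show (0:ℝ) ∈ Ioo (-r) r by constructor <;> linarith)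
      (summable_cb_mul_pow (by simp)) hy
    rw [abs_lt]; exact ⟨hz.1, hz.2⟩
  -- derivative of G is zero
  set G : ℝ → ℝ := fun z => (∑' k : ℕ, cb k * z ^ k) * Real.sqrt (1 - z) with hGdef
  have hG : ∀ y ∈ Ioo (-r) r, HasDerivAt G 0 y := by
    intro y hy
    obtain ⟨hy1, hy2⟩ := hy
    have h1y : 0 < 1 - y := by linarith
    have hyabs : |y| ≤ r := by rw [abs_le]; constructor <;> linarith
    have hD := (summable_cb_deriv hr0 hr1 hyabs).hasSum
    have hmain := cb_ode hD
    have hSval : (∑' k : ℕ, cb k * y ^ k)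
        = 2*(1-y)*(∑' k : ℕ, cb k * ((k:ℝ) * y ^ (k-1))) := hmain.tsum_eq
    have hsq : HasDerivAt (fun z : ℝ => Real.sqrt (1 - z)) (-(1/(2*Real.sqrt (1-y)))) y := by
      have hin : HasDerivAt (fun z : ℝ => 1 - z) (-1) y := by
        simpa using (hasDerivAt_id y).const_sub 1
      have := (Real.hasDerivAt_sqrt (ne_of_gt h1y)).comp y hin
      simpa [Function.comp_def] using this
    have hmul := (key y ⟨hy1, hy2⟩).mul hsq
    rw [hGdef]
    refine hmul.congr_deriv (Eq.symm ?_)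
    rw [hSval]
    have hs2 : Real.sqrt (1-y) ^ 2 = 1 - y := Real.sq_sqrt h1y.le
    have hspos : 0 < Real.sqrt (1-y) := Real.sqrt_pos.2 h1y
    set D := ∑' k : ℕ, cb k * ((k:ℝ) * y ^ (k-1))
    field_simp
    linear_combination (-D) * hs2
  -- constancy on [0, t]
  have hsub : Icc (0:ℝ) t ⊆ Ioo (-r) r := fun y hy =>
    ⟨by cases hy with | intro h1 h2 => linarith, by cases hy with | intro h1 h2 => linarith⟩
  have hcont : ContinuousOn G (Icc 0 t) := fun y hy =>
    ((hG y (hsub hy)).continuousAt).continuousWithinAt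
  have hconst := constant_of_has_deriv_right_zero hcont
    (fun y hy => (hG y (hsub (Ico_subset_Icc_self hy))).hasDerivWithinAt)
    t (right_mem_Icc.2 ht0)
  have hG0 : G 0 = 1 := by
    rw [hGdef]
    simp only
    rw [tsum_eq_single 0 (fun k hk => by simp [zero_pow hk])]
    simp [cb_zero]
  have hGt : (∑' k : ℕ, cb k * t ^ k) * Real.sqrt (1 - t) = 1 := by
    exact hconst.trans hG0
  have h1t : 0 < 1 - t := by linarith
  have hspos : 0 < Real.sqrt (1-t) := Real.sqrt_pos.2 h1t
  have habs : |t| < 1 := by rw [abs_of_nonneg ht0]; exact ht1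
  have hsummable := summable_cb_mul_pow habs
  have : (∑' k : ℕ, cb k * t ^ k) = 1 / Real.sqrt (1 - t) := by
    field_simp at hGt ⊢
    linarith [hGt]
  exact this ▸ hsummable.hasSum

lemma deriv_term (n : ℕ) (z : ℝ) :
    HasDerivAt (fun w : ℝ => cb (n+1) * w^(2*(n+1)) / (2*((n:ℝ)+1)))
      (cb (n+1) * z^(2*n+1)) z := by
  have h := ((hasDerivAt_pow (2*(n+1)) z).const_mul (cb (n+1))).div_const (2*((n:ℝ)+1))
  refine h.congr_deriv (Eq.symm ?_)
  have he : 2*(n+1) - 1 = 2*n+1 := by omega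
  rw [he]
  have hne : (2*((n:ℝ)+1)) ≠ 0 := by positivity
  field_simp
  push_cast
  ring

lemma hasSum_D2 {y : ℝ} (hy0 : 0 < y) (hy1 : y < 1) :
    HasSum (fun k : ℕ => cb (k+1) * y^(2*k+1))
      (y / (Real.sqrt (1-y^2) * (1 + Real.sqrt (1-y^2)))) := by
  have h1y : 0 < 1 - y^2 := by nlinarith
  have hs := hasSum_cb (t := y^2) (sq_nonneg y) (by nlinarith)
  have hshift : HasSum (fun k : ℕ => cb (k+1) * (y^2)^(k+1))
      (1 / Real.sqrt (1-y^2) - 1) := by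
    have h := (hasSum_nat_add_iff' (f := fun k : ℕ => cb k * (y^2)^k) 1).mpr hs
    simpa [cb_zero] using h
  have hmul := hshift.mul_left (1/y)
  have hne : y ≠ 0 := ne_of_gt hy0
  have hfun : HasSum (fun k : ℕ => cb (k+1) * y^(2*k+1))
      ((1/y) * (1 / Real.sqrt (1-y^2) - 1)) := by
    refine HasSum.congr_fun hmul fun k => ?_
    have : (y^2)^(k+1) = y^(2*k+1) * y := by rw [← pow_mul]; ring
    rw [this]
    field_simp
  convert hfun using 1
  have hspos : 0 < Real.sqrt (1-y^2) := Real.sqrt_pos.2 h1y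
  have hs2 : Real.sqrt (1-y^2) ^ 2 = 1 - y^2 := Real.sq_sqrt h1y.le
  have h1s : 0 < 1 + Real.sqrt (1-y^2) := by linarith
  field_simp
  linear_combination hs2

lemma deriv_rhs {y : ℝ} (hy : y ∈ Ioo (-1:ℝ) 1) :
    HasDerivAt (fun z : ℝ => Real.log 2 - Real.log (1 + Real.sqrt (1 - z^2)))
      (y / (Real.sqrt (1-y^2) * (1 + Real.sqrt (1-y^2)))) y := by
  obtain ⟨hy1, hy2⟩ := hy
  have h1y : 0 < 1 - y^2 := by nlinarith
  have hspos : 0 < Real.sqrt (1-y^2) := Real.sqrt_pos.2 h1y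
  have hs2 : Real.sqrt (1-y^2) ^ 2 = 1 - y^2 := Real.sq_sqrt h1y.le
  have hinner : HasDerivAt (fun z : ℝ => 1 - z^2) (-(2*y)) y := by
    simpa using (hasDerivAt_pow 2 y).const_sub 1
  have hsqrt := (Real.hasDerivAt_sqrt h1y.ne').comp y hinner
  have houter := hsqrt.const_add 1
  have h1s : 0 < 1 + Real.sqrt (1-y^2) := by linarith
  have hlog := houter.log (ne_of_gt h1s)
  have hfinal := hlog.const_sub (Real.log 2)
  refine hfinal.congr_deriv (Eq.symm ?_)
  simp only [Function.comp_apply]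
  field_simp

lemma main_nonneg {x : ℝ} (hx0 : 0 ≤ x) (hx1 : x < 1) :
    HasSum (fun k : ℕ => cb (k+1) * x^(2*(k+1)) / (2*((k:ℝ)+1)))
      (Real.log 2 - Real.log (1 + Real.sqrt (1 - x^2))) := by
  set r : ℝ := (x+1)/2 with hrdef
  have hr0 : 0 < r := by rw [hrdef]; linarith
  have hr1 : r < 1 := by rw [hrdef]; linarith
  have hxr : x < r := by rw [hrdef]; linarith
  have hu : Summable (fun k : ℕ => r ^ k) := summable_geometric_of_lt_one hr0.le hr1
  have hbound : ∀ (n : ℕ) (z : ℝ), z ∈ Ioo (-r) r → ‖cb (n+1) * z^(2*n+1)‖ ≤ r ^ n := by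
    intro n z hz
    have hzabs : |z| ≤ r := by rw [abs_le]; exact ⟨hz.1.le, hz.2.le⟩
    rw [norm_mul, norm_pow, Real.norm_eq_abs, Real.norm_eq_abs]
    calc |cb (n+1)| * |z| ^ (2*n+1) ≤ 1 * r ^ (2*n+1) :=
          mul_le_mul (cb_abs_le_one _) (pow_le_pow_left₀ (abs_nonneg z) hzabs _)
            (by positivity) one_pos.le
      _ = r ^ (2*n+1) := one_mul _
      _ ≤ r ^ n := pow_le_pow_of_le_one hr0.le hr1.le (by omega)
  have hg0 : Summable (fun k : ℕ => cb (k+1) * (0:ℝ)^(2*(k+1)) / (2*((k:ℝ)+1))) := by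
    apply summable_zero.congr
    intro k
    rw [zero_pow (by omega : 2*(k+1) ≠ 0)]
    simp
  have key : ∀ y ∈ Ioo (-r) r,
      HasDerivAt (fun z : ℝ => ∑' k : ℕ, cb (k+1) * z^(2*(k+1)) / (2*((k:ℝ)+1)))
        (∑' k : ℕ, cb (k+1) * y^(2*k+1)) y := by
    intro y hy
    exact hasDerivAt_tsum_of_isPreconnected hu isOpen_Ioo (convex_Ioo _ _).isPreconnected
      (fun n z _ => deriv_term n z) hbound
      (show (0:ℝ) ∈ Ioo (-r) r by constructor <;> linarith) hg0 hy
  set f : ℝ → ℝ := fun z => ∑' k : ℕ, cb (k+1) * z^(2*(k+1)) / (2*((k:ℝ)+1)) with hfdef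
  set g : ℝ → ℝ := fun z => Real.log 2 - Real.log (1 + Real.sqrt (1 - z^2)) with hgdef
  set φ : ℝ → ℝ := fun y => y / (Real.sqrt (1-y^2) * (1 + Real.sqrt (1-y^2))) with hφdef
  have hIccsub : Icc (0:ℝ) x ⊆ Ioo (-r) r := fun y hy =>
    ⟨by linarith [hy.1], by linarith [hy.2]⟩
  have hIccsub1 : Icc (0:ℝ) x ⊆ Ioo (-1:ℝ) 1 := fun y hy =>
    ⟨by linarith [hy.1], by linarith [hy.2]⟩
  have hderivf : ∀ y ∈ Ico (0:ℝ) x, HasDerivWithinAt f (φ y) (Ici y) y := by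
    intro y hy
    have hmem : y ∈ Ioo (-r) r := hIccsub (Ico_subset_Icc_self hy)
    have hf := key y hmem
    have hval : (∑' k : ℕ, cb (k+1) * y^(2*k+1)) = φ y := by
      rcases eq_or_lt_of_le hy.1 with h0 | h0
      · rw [← h0]
        have hzero2 : ∀ k : ℕ, cb (k+1) * (0:ℝ)^(2*k+1) = 0 := fun k => by
          rw [zero_pow (by omega : 2*k+1 ≠ 0), mul_zero]
        rw [tsum_congr hzero2, tsum_zero, hφdef]
        simp
      · exact (hasSum_D2 h0 (lt_trans hy.2 hx1)).tsum_eq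
    rw [← hval]
    exact hf.hasDerivWithinAt
  have hderivg : ∀ y ∈ Ico (0:ℝ) x, HasDerivWithinAt g (φ y) (Ici y) y := fun y hy =>
    (deriv_rhs (hIccsub1 (Ico_subset_Icc_self hy))).hasDerivWithinAt
  have hfcont : ContinuousOn f (Icc 0 x) := fun y hy =>
    ((key y (hIccsub hy)).continuousAt).continuousWithinAt
  have hgcont : ContinuousOn g (Icc 0 x) := fun y hy =>
    ((deriv_rhs (hIccsub1 hy)).continuousAt).continuousWithinAt
  have hf0 : f 0 = 0 := by
    have hzero : ∀ k : ℕ, cb (k+1) * (0:ℝ)^(2*(k+1)) / (2*((k:ℝ)+1)) = 0 := by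
      intro k
      rw [zero_pow (by omega : 2*(k+1) ≠ 0)]
      simp
    rw [hfdef]
    simp only
    rw [tsum_congr hzero, tsum_zero]
  have hg0' : g 0 = 0 := by
    rw [hgdef]
    simp only
    norm_num
  have heq := eq_of_has_deriv_right_eq hderivf hderivg hfcont hgcont
    (by rw [hf0, hg0']) x (right_mem_Icc.2 hx0)
  have hsummable : Summable (fun k : ℕ => cb (k+1) * x^(2*(k+1)) / (2*((k:ℝ)+1))) := by
    have hgeo : Summable (fun k : ℕ => (x^2) * (x^2)^k) :=
      (summable_geometric_of_lt_one (sq_nonneg x) (by nlinarith)).mul_left (x^2)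
    apply Summable.of_norm_bounded hgeo
    intro k
    rw [norm_div, norm_mul, norm_pow, Real.norm_eq_abs, Real.norm_eq_abs, Real.norm_eq_abs]
    have h1 : |x| ^ (2*(k+1)) = (x^2)^(k+1) := by
      rw [pow_mul, sq_abs]
    have h2 : |2*((k:ℝ)+1)| = 2*((k:ℝ)+1) := abs_of_pos (by positivity)
    rw [h1, h2]
    have h3 : (1:ℝ) ≤ 2*((k:ℝ)+1) := by
      have : (0:ℝ) ≤ (k:ℝ) := Nat.cast_nonneg k
      linarith
    have h4 : (0:ℝ) ≤ (x^2)^(k+1) := by positivity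
    calc |cb (k+1)| * (x^2)^(k+1) / (2*((k:ℝ)+1)) ≤ 1 * (x^2)^(k+1) / 1 := by
          gcongr
          · exact cb_abs_le_one _
      _ = (x^2) * (x^2)^k := by ring
  have : f x = Real.log 2 - Real.log (1 + Real.sqrt (1 - x^2)) := heq
  rw [hfdef] at this
  exact this ▸ hsummable.hasSum

theorem stmt_0 (x : ℝ) (hx : x ∈ Set.Ioo (-1 : ℝ) 1) :
    HasSum (fun k : ℕ =>
      (Nat.choose (2 * (k + 1)) (k + 1) : ℝ) * x ^ (2 * (k + 1)) /
        (2 ^ (2 * (k + 1)) * (2 * (k + 1))))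
      (Real.log 2 - Real.log (1 + Real.sqrt (1 - x ^ 2))) := by
  obtain ⟨hx1, hx2⟩ := hx
  have main : ∀ {y : ℝ}, 0 ≤ y → y < 1 →
      HasSum (fun k : ℕ =>
        (Nat.choose (2 * (k + 1)) (k + 1) : ℝ) * y ^ (2 * (k + 1)) /
          (2 ^ (2 * (k + 1)) * (2 * (k + 1))))
        (Real.log 2 - Real.log (1 + Real.sqrt (1 - y ^ 2))) := by
    intro y hy0 hy1
    refine HasSum.congr_fun (main_nonneg hy0 hy1) fun k => ?_
    simp only [cb]
    have h4 : (2:ℝ) ^ (2*(k+1)) = 4 ^ (k+1) := by rw [pow_mul]; norm_num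
    rw [h4]
    have hne1 : ((4:ℝ)) ^ (k+1) ≠ 0 := by positivity
    have hne2 : (2*((k:ℝ)+1)) ≠ 0 := by positivity
    push_cast
    field_simp
  rcases le_or_gt 0 x with h0 | h0
  · exact main h0 hx2
  · have h := main (y := -x) (by linarith) (by linarith)
    have hfun : (fun k : ℕ =>
        (Nat.choose (2 * (k + 1)) (k + 1) : ℝ) * (-x) ^ (2 * (k + 1)) /
          (2 ^ (2 * (k + 1)) * (2 * (k + 1)))) = (fun k : ℕ =>
        (Nat.choose (2 * (k + 1)) (k + 1) : ℝ) * x ^ (2 * (k + 1)) /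
          (2 ^ (2 * (k + 1)) * (2 * (k + 1)))) := by
      funext k
      rw [Even.neg_pow ⟨k+1, by ring⟩]
    rw [hfun, neg_sq] at h
    exact h
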